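/- Let d ≥ 1, let c ∈ ℤ^d with c ≠ 0, let Λ be a real number with Λ ≥ 3, and suppose (a,b) ∈ D_Λ^+(c). Then for every real number t ≥ 0 such that a + tc and b + tc lie in ℤ^d (in particular for every nonnegative integer t), the pair (a + tc, b + tc) also belongs to D_Λ^+(c). -/

import Mathlib

/-- The lattice point `a ∈ ℤ^d` viewed as a vector in Euclidean space `ℝ^d`. -/
noncomputable def latt {d : ℕ} (a : Fin d → ℤ) : EuclideanSpace ℝ (Fin d) :=
  WithLp.toLp 2 (fun i => (a i : ℝ))

/-- The Lipschitz domain `D_Λ^+(c)`: the pair `(a, b)` belongs to it iff there are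
`a', b' ∈ ℤ^d` and a real `t ≥ 0` with `a = a' + tc`, `b = b' + tc`,
`|a| ≥ Λ(|a'| + |c|)|c|`, `|b| ≥ Λ(|b'| + |c|)|c|`, and
`|a|/|c| ≥ 2Λ²`, `|b|/|c| ≥ 2Λ²`. -/
def LipDom {d : ℕ} (Λ : ℝ) (c a b : Fin d → ℤ) : Prop :=
  ∃ (a' b' : Fin d → ℤ) (t : ℝ), 0 ≤ t ∧
    latt a = latt a' + t • latt c ∧
    latt b = latt b' + t • latt c ∧
    Λ * (‖latt a'‖ + ‖latt c‖) * ‖latt c‖ ≤ ‖latt a‖ ∧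
    Λ * (‖latt b'‖ + ‖latt c‖) * ‖latt c‖ ≤ ‖latt b‖ ∧
    2 * Λ ^ 2 ≤ ‖latt a‖ / ‖latt c‖ ∧
    2 * Λ ^ 2 ≤ ‖latt b‖ / ‖latt c‖

lemma one_le_norm_latt {d : ℕ} (c : Fin d → ℤ) (hc : c ≠ 0) : 1 ≤ ‖latt c‖ := by
  obtain ⟨i, hi⟩ := Function.ne_iff.mp hc
  have h1 : (1 : ℝ) ≤ ‖latt c i‖ := by
    simp only [latt, Real.norm_eq_abs, ← Int.cast_abs]
    exact_mod_cast Int.one_le_abs hi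
  have hsum : (1 : ℝ) ≤ ∑ j, ‖latt c j‖ ^ 2 := by
    refine le_trans ?_ (Finset.single_le_sum (fun j _ => sq_nonneg ‖latt c j‖)
      (Finset.mem_univ i))
    nlinarith [norm_nonneg (latt c i)]
  rw [EuclideanSpace.norm_eq]
  calc (1 : ℝ) = Real.sqrt 1 := Real.sqrt_one.symm
    _ ≤ _ := Real.sqrt_le_sqrt hsum

/-- If `x = x' + s·c` with `s ≥ 0`, `‖c‖ ≥ 1`, and `‖x‖ ≥ 3‖x'‖`, then the inner
product `⟪x, c⟫` is nonnegative, hence adding a nonnegative multiple of `c`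
does not decrease the norm. -/
lemma norm_grows {d : ℕ} (c x x' : EuclideanSpace ℝ (Fin d)) (s t : ℝ)
    (hs : 0 ≤ s) (ht : 0 ≤ t) (hc : 1 ≤ ‖c‖)
    (hx : x = x' + s • c) (hx3 : 3 * ‖x'‖ ≤ ‖x‖) :
    ‖x‖ ≤ ‖x + t • c‖ := by
  have hinner : (0:ℝ) ≤ inner ℝ x c := by
    have h1 : -(‖x'‖ * ‖c‖) ≤ (inner ℝ x' c : ℝ) :=
      neg_le_of_abs_le (abs_real_inner_le_norm x' c)
    have h2 : ‖x‖ ≤ ‖x'‖ + s * ‖c‖ := by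
      rw [hx]
      calc ‖x' + s • c‖ ≤ ‖x'‖ + ‖s • c‖ := norm_add_le _ _
        _ = ‖x'‖ + s * ‖c‖ := by rw [norm_smul, Real.norm_eq_abs, abs_of_nonneg hs]
    have h3 : (inner ℝ x c : ℝ) = inner ℝ x' c + s * ‖c‖ ^ 2 := by
      rw [hx, inner_add_left, real_inner_smul_left, real_inner_self_eq_norm_sq]
    have hx'n : (0:ℝ) ≤ ‖x'‖ := norm_nonneg _
    nlinarith [sq_nonneg ‖c‖, norm_nonneg x]
  have hsq : ‖x‖ ^ 2 ≤ ‖x + t • c‖ ^ 2 := by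
    have := norm_add_sq_real x (t • c)
    have h4 : (inner ℝ x (t • c) : ℝ) = t * inner ℝ x c := real_inner_smul_right x c t
    nlinarith [sq_nonneg ‖t • c‖, mul_nonneg ht hinner]
  nlinarith [norm_nonneg x, norm_nonneg (x + t • c)]

/-- Corollary 2.2(ii): if `(a,b) ∈ D_Λ^+(c)` with `Λ ≥ 3`, then for every real
`t ≥ 0` such that `a + tc` and `b + tc` are again lattice points,
`(a + tc, b + tc) ∈ D_Λ^+(c)`. -/
theorem stmt_5 {d : ℕ} (hd : 1 ≤ d) (c : Fin d → ℤ) (hc : c ≠ 0)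
    (Λ : ℝ) (hΛ : 3 ≤ Λ) (a b : Fin d → ℤ) (hab : LipDom Λ c a b)
    (t : ℝ) (ht : 0 ≤ t) (a₂ b₂ : Fin d → ℤ)
    (ha₂ : latt a₂ = latt a + t • latt c) (hb₂ : latt b₂ = latt b + t • latt c) :
    LipDom Λ c a₂ b₂ := by
  obtain ⟨a', b', s, hs, ha, hb, h1, h2, h3, h4⟩ := hab
  have hcn : 1 ≤ ‖latt c‖ := one_le_norm_latt c hc
  have hcn0 : 0 < ‖latt c‖ := lt_of_lt_of_le one_pos hcn
  have ha3 : 3 * ‖latt a'‖ ≤ ‖latt a‖ := by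
    nlinarith [norm_nonneg (latt a'), norm_nonneg (latt c), h1, hΛ, hcn,
      mul_nonneg (norm_nonneg (latt a')) (sub_nonneg.mpr hcn),
      mul_nonneg (sub_nonneg.mpr hΛ) (mul_nonneg (add_nonneg (norm_nonneg (latt a')) (norm_nonneg (latt c))) (norm_nonneg (latt c)))]
  have hb3 : 3 * ‖latt b'‖ ≤ ‖latt b‖ := by
    nlinarith [norm_nonneg (latt b'), norm_nonneg (latt c), h2, hΛ, hcn,
      mul_nonneg (norm_nonneg (latt b')) (sub_nonneg.mpr hcn),
      mul_nonneg (sub_nonneg.mpr hΛ) (mul_nonneg (add_nonneg (norm_nonneg (latt b')) (norm_nonneg (latt c))) (norm_nonneg (latt c)))]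
  have hga : ‖latt a‖ ≤ ‖latt a₂‖ := by
    rw [ha₂]; exact norm_grows _ _ _ s t hs ht hcn ha ha3
  have hgb : ‖latt b‖ ≤ ‖latt b₂‖ := by
    rw [hb₂]; exact norm_grows _ _ _ s t hs ht hcn hb hb3
  refine ⟨a', b', s + t, by linarith, ?_, ?_, le_trans h1 hga, le_trans h2 hgb,
    le_trans h3 (by gcongr),
    le_trans h4 ((by gcongr))⟩
  · rw [ha₂, ha, add_smul, add_assoc]
  · rw [hb₂, hb, add_smul, add_assoc]
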